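/- arXiv:1512.09035 — 2 statements merged into one kernel-verified Lean document; each statement's English description precedes it below -/
import Mathlib

section
/- Let p be the step distribution of an irreducible random walk on ℤ^d with finite support V. For every δ ∈ M, the function f(δ, x) = ⟨x, δ⟩ − log κ(x) on ℝ^d attains its global maximum at a unique point s ∈ ℝ^d, and this point satisfies ∇ log κ(s) = δ. -/
/- Framework for random walks on the integer lattice ℤ^d. -/

noncomputable section

namespace RWalk

/-- `ℝ^d` with the Euclidean norm. -/
abbrev E (d : ℕ) : Type := EuclideanSpace ℝ (Fin d)

/-- The embedding of `ℤ^d` into `ℝ^d`. -/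
def emb {d : ℕ} (x : Fin d → ℤ) : E d := WithLp.toLp 2 (fun i => (x i : ℝ))

/-- The bilinear pairing `⟨x, y⟩ = ∑ i, x i * y i` on `ℝ^d`. -/
def pairR {d : ℕ} (x y : E d) : ℝ := ∑ i, x i * y i

/-- The ℓ¹-norm on `ℝ^d`. -/
def l1 {d : ℕ} (x : E d) : ℝ := ∑ i, |x i|

/-- The `n`-step transition function of the walk with step distribution `p`:
`tfun p 0 = δ₀`, hence `tfun p 1 = p` and
`tfun p (n+1) x = ∑ y, tfun p n y * p (x - y)`. -/
def tfun {d : ℕ} (p : (Fin d → ℤ) → ℝ) : ℕ → (Fin d → ℤ) → ℝ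
  | 0, x => if x = 0 then 1 else 0
  | n + 1, x => ∑ᶠ y : Fin d → ℤ, tfun p n y * p (x - y)

/-- `κ(x) = ∑_{v ∈ V} p(v) e^{⟨x,v⟩}`. -/
def kappa {d : ℕ} (p : (Fin d → ℤ) → ℝ) (x : E d) : ℝ :=
  ∑ᶠ v : Fin d → ℤ, p v * Real.exp (pairR x (emb v))

/-- `log κ`. -/
def logKappa {d : ℕ} (p : (Fin d → ℤ) → ℝ) : E d → ℝ := fun x => Real.log (kappa p x)

/-- `φ(δ) = sup_{x ∈ ℝ^d} (⟨x,δ⟩ - log κ(x))`. -/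
def phi {d : ℕ} (p : (Fin d → ℤ) → ℝ) (δ : E d) : ℝ :=
  sSup (Set.range fun x : E d => pairR x δ - logKappa p x)

/-- `M`, the interior of the convex hull of the support `V` of `p`. -/
def Mset {d : ℕ} (p : (Fin d → ℤ) → ℝ) : Set (E d) :=
  interior (convexHull ℝ (emb '' Function.support p))

/-- The Hessian matrix of `f` at `x`. -/
def hessMat {d : ℕ} (f : E d → ℝ) (x : E d) : Matrix (Fin d) (Fin d) ℝ :=
  fun i j => fderiv ℝ (fun y => fderiv ℝ f y (EuclideanSpace.single j 1)) x
      (EuclideanSpace.single i 1)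

/-- The quadratic form `u ↦ uᵀ A u` of a matrix `A`. -/
def quadForm {d : ℕ} (A : Matrix (Fin d) (Fin d) ℝ) (u : E d) : ℝ :=
  ∑ i, ∑ j, u i * A i j * u j

/-- The second directional derivative `D_u² f(x)`. -/
def D2 {d : ℕ} (f : E d → ℝ) (x u : E d) : ℝ :=
  iteratedDeriv 2 (fun t : ℝ => f (x + t • u)) 0

/-- Irreducibility: for every `x ∈ ℤ^d` there is `n ∈ ℕ` with `p(n; x) > 0`. -/
def Irred {d : ℕ} (p : (Fin d → ℤ) → ℝ) : Prop :=
  ∀ x : Fin d → ℤ, ∃ n : ℕ, 0 < n ∧ 0 < tfun p n x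

/-- The step distribution of the simple random walk on `ℤ^d`. -/
def srw (d : ℕ) (v : Fin d → ℤ) : ℝ :=
  if (∑ i, (v i).natAbs) = 1 then (2 * (d : ℝ))⁻¹ else 0

open scoped RealInnerProductSpace

-- basic lemmas
lemma pairR_eq_inner {d : ℕ} (x y : E d) : pairR x y = ⟪x, y⟫ := by
  simp [pairR, PiLp.inner_apply, RCLike.inner_apply, conj_trivial]
  exact Finset.sum_congr rfl fun _ _ => mul_comm _ _

lemma emb_sub_add {d : ℕ} (x y : Fin d → ℤ) : emb x = emb y + emb (x - y) := by
  ext i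
  simp only [emb, PiLp.add_apply, PiLp.toLp_apply, Pi.sub_apply, Int.cast_sub]
  ring

variable {d : ℕ} {p : (Fin d → ℤ) → ℝ}

lemma kappa_eq_sum (hfin : (Function.support p).Finite) (x : E d) :
    kappa p x = ∑ v ∈ hfin.toFinset, p v * Real.exp ⟪x, emb v⟫ := by
  have h : Function.support (fun v => p v * Real.exp (pairR x (emb v)))
      ⊆ (hfin.toFinset : Set (Fin d → ℤ)) := by
    rw [Set.Finite.coe_toFinset]
    intro v hv
    simp only [Function.mem_support] at hv
    exact fun h0 => hv (by simp [h0])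
  rw [kappa, finsum_eq_finset_sum_of_support_subset _ h]
  simp [pairR_eq_inner]

lemma supp_nonempty (hfin : (Function.support p).Finite) (hsum : ∑ᶠ v, p v = 1) :
    hfin.toFinset.Nonempty := by
  by_contra h
  rw [Finset.not_nonempty_iff_eq_empty] at h
  have : Function.support p = ∅ := by
    rw [← Set.Finite.coe_toFinset hfin, h]; simp
  have hz : ∀ v, p v = 0 := by
    intro v
    by_contra hv
    exact absurd (Function.mem_support.2 hv) (by rw [this]; exact Set.notMem_empty v)
  rw [finsum_congr hz] at hsum
  simpa using hsum

lemma kappa_pos (hp : ∀ v, 0 ≤ p v) (hfin : (Function.support p).Finite)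
    (hsum : ∑ᶠ v, p v = 1) (x : E d) : 0 < kappa p x := by
  obtain ⟨v₀, hv₀⟩ := supp_nonempty hfin hsum
  rw [kappa_eq_sum hfin]
  apply Finset.sum_pos'
  · intro v _; exact mul_nonneg (hp v) (Real.exp_pos _).le
  · refine ⟨v₀, hv₀, ?_⟩
    have : p v₀ ≠ 0 := by simpa [Function.mem_support] using (Set.Finite.mem_toFinset hfin).1 hv₀
    have : 0 < p v₀ := lt_of_le_of_ne (hp v₀) (Ne.symm this)
    positivity

lemma mem_V_pos (hp : ∀ v, 0 ≤ p v) (hfin : (Function.support p).Finite) {v : Fin d → ℤ}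
    (hv : v ∈ hfin.toFinset) : 0 < p v := by
  have : p v ≠ 0 := by simpa [Function.mem_support] using (Set.Finite.mem_toFinset hfin).1 hv
  exact lt_of_le_of_ne (hp v) (Ne.symm this)

/-- candidate gradient of `logKappa` -/
def mvec (hfin : (Function.support p).Finite) (x : E d) : E d :=
  (kappa p x)⁻¹ • ∑ v ∈ hfin.toFinset, (p v * Real.exp ⟪x, emb v⟫) • emb v

lemma hasFDerivAt_kappa (hfin : (Function.support p).Finite) (x : E d) :
    HasFDerivAt (kappa p)
      (∑ v ∈ hfin.toFinset, (p v * Real.exp ⟪x, emb v⟫) • (innerSL ℝ (emb v))) x := by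
  have h : ∀ y : E d, kappa p y = ∑ v ∈ hfin.toFinset, p v * Real.exp ⟪y, emb v⟫ :=
    kappa_eq_sum hfin
  have : HasFDerivAt (fun y => ∑ v ∈ hfin.toFinset, p v * Real.exp ⟪y, emb v⟫)
      (∑ v ∈ hfin.toFinset, (p v * Real.exp ⟪x, emb v⟫) • (innerSL ℝ (emb v))) x := by
    apply HasFDerivAt.fun_sum
    intro v _
    have h1 : HasFDerivAt (fun y : E d => ⟪y, emb v⟫) (innerSL ℝ (emb v)) x := by
      have h0 := (innerSL ℝ (emb v)).hasFDerivAt (x := x)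
      have he : ∀ y : E d, innerSL ℝ (emb v) y = ⟪y, emb v⟫ := fun y => by rw [innerSL_apply_apply]; exact real_inner_comm _ _
      exact h0.congr_of_eventuallyEq (Filter.Eventually.of_forall fun y => (he y).symm)
    have h2 := h1.exp
    have h3 := h2.const_mul (p v)
    rw [smul_smul] at h3
    exact h3
  exact this.congr_of_eventuallyEq (Filter.Eventually.of_forall fun y => (h y))

lemma hasGradientAt_logKappa (hp : ∀ v, 0 ≤ p v) (hfin : (Function.support p).Finite)
    (hsum : ∑ᶠ v, p v = 1) (x : E d) :
    HasGradientAt (logKappa p) (mvec hfin x) x := by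
  have hκ := kappa_pos hp hfin hsum x
  have hd := (hasFDerivAt_kappa hfin x).log hκ.ne'
  rw [hasGradientAt_iff_hasFDerivAt]
  have he : (InnerProductSpace.toDual ℝ (E d)) (mvec hfin x)
      = (kappa p x)⁻¹ • ∑ v ∈ hfin.toFinset, (p v * Real.exp ⟪x, emb v⟫) • (innerSL ℝ (emb v)) := by
    ext h
    simp only [InnerProductSpace.toDual_apply_apply, mvec, ContinuousLinearMap.smul_apply,
      ContinuousLinearMap.sum_apply, innerSL_apply_apply, inner_smul_left, sum_inner,
      conj_trivial, smul_eq_mul]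
  rw [he]
  exact hd

lemma emb_zero {d : ℕ} : emb (0 : Fin d → ℤ) = 0 := by
  ext i; simp [emb]

lemma irred_unique_dir (hirr : Irred p) (u : E d) (c : ℝ)
    (hc : ∀ v, p v ≠ 0 → ⟪u, emb v⟫ = c) : u = 0 := by
  have key : ∀ n (x : Fin d → ℤ), tfun p n x ≠ 0 → ⟪u, emb x⟫ = n * c := by
    intro n
    induction n with
    | zero =>
      intro x hx
      have : x = 0 := by
        by_contra h; simp [tfun, h] at hx
      subst this
      simp [emb_zero]
    | succ n ih =>
      intro x hx
      have hx' : ∑ᶠ y : Fin d → ℤ, tfun p n y * p (x - y) ≠ 0 := hx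
      have : ∃ y, tfun p n y * p (x - y) ≠ 0 := by
        by_contra h
        push_neg at h
        apply hx'
        rw [finsum_congr h]
        simp
      obtain ⟨y, hy⟩ := this
      rw [mul_ne_zero_iff] at hy
      have h1 := ih y hy.1
      have h2 := hc _ hy.2
      rw [emb_sub_add x y, inner_add_right, h1, h2]
      push_cast
      ring
  have hc0 : c = 0 := by
    obtain ⟨n, hn, h0⟩ := hirr 0
    have := key n 0 h0.ne'
    rw [emb_zero, inner_zero_right] at this
    have := this.symm
    rcases mul_eq_zero.1 this with h | h
    · exact absurd h (by positivity)
    · exact h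
  have hall : ∀ x : Fin d → ℤ, ⟪u, emb x⟫ = 0 := by
    intro x
    obtain ⟨n, _, h0⟩ := hirr x
    rw [key n x h0.ne', hc0, mul_zero]
  ext i
  have := hall (fun j => if j = i then 1 else 0)
  simp only [PiLp.inner_apply, RCLike.inner_apply, conj_trivial] at this
  rw [Finset.sum_eq_single i] at this
  · simpa [emb] using this
  · intro b _ hb
    simp [emb, hb]
  · simp

lemma jensen_strict (hp : ∀ v, 0 ≤ p v) (hfin : (Function.support p).Finite)
    (hsum : ∑ᶠ v, p v = 1) (s x : E d)
    (hne : ∃ j ∈ hfin.toFinset, ∃ k ∈ hfin.toFinset, ⟪x - s, emb j⟫ ≠ ⟪x - s, emb k⟫) :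
    Real.log (kappa p s) + ⟪x - s, mvec hfin s⟫ < Real.log (kappa p x) := by
  set V := hfin.toFinset with hV
  have hκs := kappa_pos hp hfin hsum s
  have hκx := kappa_pos hp hfin hsum x
  set w : (Fin d → ℤ) → ℝ := fun v => p v * Real.exp ⟪s, emb v⟫ / kappa p s with hw
  have hw1 : ∑ v ∈ V, w v = 1 := by
    rw [← Finset.sum_div, ← kappa_eq_sum hfin s, div_self hκs.ne']
  have hwpos : ∀ v ∈ V, 0 < w v := by
    intro v hv
    have := mem_V_pos hp hfin hv
    have := hκs
    rw [hw]
    positivity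
  have hj := strictConvexOn_exp.map_sum_lt (w := w) (p := fun v => ⟪x - s, emb v⟫)
    hwpos hw1 (fun v _ => Set.mem_univ _) hne
  -- identify LHS argument
  have hlhs : ∑ v ∈ V, w v • ⟪x - s, emb v⟫ = ⟪x - s, mvec hfin s⟫ := by
    rw [mvec, inner_smul_right, inner_sum]
    rw [Finset.mul_sum, Finset.sum_congr rfl]
    intro v hv
    rw [inner_smul_right, hw]
    simp only [smul_eq_mul]
    ring
  have hrhs : ∑ v ∈ V, w v • Real.exp ⟪x - s, emb v⟫ = kappa p x / kappa p s := by
    rw [kappa_eq_sum hfin x, Finset.sum_div, Finset.sum_congr rfl]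
    intro v hv
    simp only [smul_eq_mul, hw]
    have h9 : ⟪s, emb v⟫ + ⟪x - s, emb v⟫ = ⟪x, emb v⟫ := by
      rw [← inner_add_left]; congr 1; abel
    rw [div_mul_eq_mul_div, mul_assoc, ← Real.exp_add, h9]
  rw [hlhs, hrhs] at hj
  have := Real.log_lt_log (Real.exp_pos _) hj
  rw [Real.log_exp, Real.log_div hκx.ne' hκs.ne'] at this
  linarith

lemma continuous_g (hp : ∀ v, 0 ≤ p v) (hfin : (Function.support p).Finite)
    (hsum : ∑ᶠ v, p v = 1) (δ : E d) :
    Continuous (fun x : E d => pairR x δ - logKappa p x) := by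
  have h1 : Continuous (fun x : E d => pairR x δ) := by
    simp only [pairR_eq_inner]
    exact continuous_id.inner continuous_const
  have hκ : Continuous (kappa p) := by
    have : (kappa p) = fun x => ∑ v ∈ hfin.toFinset, p v * Real.exp ⟪x, emb v⟫ :=
      funext (kappa_eq_sum hfin)
    rw [this]
    exact continuous_finset_sum _ fun v _ =>
      continuous_const.mul (Real.continuous_exp.comp (continuous_id.inner continuous_const))
  have h2 : Continuous (logKappa p) := by
    rw [continuous_iff_continuousAt]
    intro x
    exact (Real.continuousAt_log (kappa_pos hp hfin hsum x).ne').comp hκ.continuousAt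
  exact h1.sub h2

lemma pair_le (hp : ∀ v, 0 ≤ p v) (hfin : (Function.support p).Finite)
    (C : ℝ) (hC : ∀ v ∈ hfin.toFinset, -Real.log (p v) ≤ C) (x : E d) {w : E d}
    (hw : w ∈ convexHull ℝ (emb '' Function.support p)) :
    ⟪x, w⟫ ≤ logKappa p x + C := by
  have hlin : IsLinearMap ℝ (fun w : E d => ⟪x, w⟫) :=
    ⟨fun a b => inner_add_right x a b, fun c a => real_inner_smul_right x a c⟩
  have hconv : Convex ℝ {w : E d | ⟪x, w⟫ ≤ logKappa p x + C} :=
    convex_halfSpace_le hlin _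
  refine convexHull_min ?_ hconv hw
  rintro w' ⟨v, hv, rfl⟩
  have hvV : v ∈ hfin.toFinset := (Set.Finite.mem_toFinset hfin).2 hv
  have hpv : 0 < p v := mem_V_pos hp hfin hvV
  have hsingle : p v * Real.exp ⟪x, emb v⟫ ≤ kappa p x := by
    rw [kappa_eq_sum hfin]
    exact Finset.single_le_sum (f := fun v => p v * Real.exp ⟪x, emb v⟫)
      (fun v _ => mul_nonneg (hp v) (Real.exp_pos _).le) hvV
  have hlog := Real.log_le_log (by positivity) hsingle
  rw [Real.log_mul hpv.ne' (Real.exp_pos _).ne', Real.log_exp] at hlog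
  have := hC v hvV
  show ⟪x, emb v⟫ ≤ logKappa p x + C
  rw [logKappa]
  linarith

lemma g_coercive (hp : ∀ v, 0 ≤ p v) (hfin : (Function.support p).Finite)
    (hsum : ∑ᶠ v, p v = 1) (δ : E d) (hδ : δ ∈ Mset p) :
    ∃ ε > (0:ℝ), ∃ C : ℝ, ∀ x : E d, pairR x δ - logKappa p x ≤ C - ε * ‖x‖ := by
  rw [Mset, mem_interior_iff_mem_nhds, Metric.mem_nhds_iff] at hδ
  obtain ⟨ε, hε, hball⟩ := hδ
  have hVne := supp_nonempty hfin hsum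
  obtain ⟨C, hC⟩ : ∃ C : ℝ, ∀ v ∈ hfin.toFinset, -Real.log (p v) ≤ C :=
    ⟨hfin.toFinset.sup' hVne (fun v => -Real.log (p v)), fun v hv => by exact Finset.le_sup' (fun v => -Real.log (p v)) hv⟩
  refine ⟨ε / 2, by positivity, C, fun x => ?_⟩
  rcases eq_or_ne x 0 with rfl | hx
  · have h0 := pair_le hp hfin C hC 0 (hball (Metric.mem_ball_self hε))
    rw [inner_zero_left] at h0
    have : pairR 0 δ = 0 := by rw [pairR_eq_inner, inner_zero_left]
    rw [this]
    simp only [norm_zero, mul_zero]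
    -- need -logKappa p 0 ≤ C
    have h1 := pair_le hp hfin C hC 0 (hball (Metric.mem_ball_self hε))
    rw [inner_zero_left] at h1
    linarith
  · set u : E d := δ + (ε / 2) • ‖x‖⁻¹ • x with hu
    have hxn : 0 < ‖x‖ := norm_pos_iff.2 hx
    have humem : u ∈ Metric.ball δ ε := by
      rw [Metric.mem_ball, dist_eq_norm]
      have : u - δ = (ε / 2) • ‖x‖⁻¹ • x := by rw [hu]; abel
      rw [this, norm_smul, norm_smul, norm_inv, norm_norm,
        Real.norm_eq_abs, abs_of_pos (by positivity : (0:ℝ) < ε / 2),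
        inv_mul_cancel₀ hxn.ne', mul_one]
      linarith
    have h1 := pair_le hp hfin C hC x (hball humem)
    rw [hu, inner_add_right, real_inner_smul_right, real_inner_smul_right,
      real_inner_self_eq_norm_sq] at h1
    have h2 : ‖x‖⁻¹ * ‖x‖ ^ 2 = ‖x‖ := by field_simp
    rw [h2] at h1
    rw [pairR_eq_inner]
    linarith

lemma exists_max (hp : ∀ v, 0 ≤ p v) (hfin : (Function.support p).Finite)
    (hsum : ∑ᶠ v, p v = 1) (δ : E d) (hδ : δ ∈ Mset p) :
    ∃ s : E d, ∀ x : E d, pairR x δ - logKappa p x ≤ pairR s δ - logKappa p s := by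
  obtain ⟨ε, hε, C, hbound⟩ := g_coercive hp hfin hsum δ hδ
  set g := fun x : E d => pairR x δ - logKappa p x with hgdef
  have hg := continuous_g hp hfin hsum δ
  set R := max 1 ((C + 1 - g 0) / ε) with hRdef
  have hR0 : (0:ℝ) < R := lt_of_lt_of_le one_pos (le_max_left _ _)
  obtain ⟨s, hsmem, hsmax⟩ := (isCompact_closedBall (0:E d) R).exists_isMaxOn
    ⟨0, by simp [hR0.le]⟩ hg.continuousOn
  refine ⟨s, fun x => ?_⟩
  by_cases hx : ‖x‖ ≤ R
  · exact hsmax (by simpa [Metric.mem_closedBall, dist_zero_right] using hx)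
  · push_neg at hx
    have h0 : g 0 ≤ g s := hsmax (by simp [hR0.le])
    have h1 := hbound x
    have h2 : (C + 1 - g 0) / ε ≤ R := le_max_right _ _
    have h3 : C + 1 - g 0 ≤ R * ε := (div_le_iff₀ hε).1 h2
    have h4 : ε * R < ε * ‖x‖ := mul_lt_mul_of_pos_left hx hε
    have h5 : R * ε = ε * R := mul_comm _ _
    have h0' : pairR 0 δ - logKappa p 0 ≤ pairR s δ - logKappa p s := h0
    have h3' : C + 1 - (pairR 0 δ - logKappa p 0) ≤ R * ε := h3
    linarith

/-- For an irreducible finitely supported random walk and `δ ∈ M`, the function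
`x ↦ ⟨x,δ⟩ - log κ(x)` attains its global maximum at a unique point `s`, which
satisfies `∇ log κ(s) = δ`. -/
theorem statement2 (d : ℕ) (p : (Fin d → ℤ) → ℝ) (hp : ∀ v, 0 ≤ p v)
    (hfin : (Function.support p).Finite) (hsum : ∑ᶠ v, p v = 1) (hirr : Irred p)
    (δ : E d) (hδ : δ ∈ Mset p) :
    ∃ s : E d,
      (∀ x : E d, pairR x δ - logKappa p x ≤ pairR s δ - logKappa p s) ∧
      (∀ s' : E d,
        (∀ x : E d, pairR x δ - logKappa p x ≤ pairR s' δ - logKappa p s') → s' = s) ∧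
      gradient (logKappa p) s = δ := by
  obtain ⟨s, hs⟩ := exists_max hp hfin hsum δ hδ
  -- the gradient condition at any global max point
  have hgradAt : ∀ t : E d,
      (∀ x : E d, pairR x δ - logKappa p x ≤ pairR t δ - logKappa p t) →
      mvec hfin t = δ := by
    intro t ht
    have hlog := hasGradientAt_logKappa hp hfin hsum t
    have hlogF : HasFDerivAt (logKappa p)
        ((InnerProductSpace.toDual ℝ (E d)) (mvec hfin t)) t := hlog
    have hlin : HasFDerivAt (fun x : E d => pairR x δ)
        ((InnerProductSpace.toDual ℝ (E d)) δ : E d →L[ℝ] ℝ) t := by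
      have h0 := ((InnerProductSpace.toDual ℝ (E d)) δ).hasFDerivAt (x := t)
      refine h0.congr_of_eventuallyEq (Filter.Eventually.of_forall fun y => ?_)
      simp only [pairR_eq_inner, InnerProductSpace.toDual_apply_apply]
      exact real_inner_comm _ _
    have hgF := hlin.sub hlogF
    have hmax : IsLocalMax (fun x : E d => pairR x δ - logKappa p x) t :=
      Filter.Eventually.of_forall fun x => ht x
    have h0 := hmax.hasFDerivAt_eq_zero hgF
    have h1 : (InnerProductSpace.toDual ℝ (E d)) (δ - mvec hfin t) = 0 := by
      rw [map_sub]; exact h0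
    have h2 : δ - mvec hfin t = 0 := by
      apply (InnerProductSpace.toDual ℝ (E d)).injective
      rw [h1, map_zero]
    rw [sub_eq_zero] at h2
    exact h2.symm
  have hVne := supp_nonempty hfin hsum
  have hmv : mvec hfin s = δ := hgradAt s hs
  refine ⟨s, hs, ?_, ?_⟩
  · intro s' hs'
    by_contra hne
    have hnc : ∃ j ∈ hfin.toFinset, ∃ k ∈ hfin.toFinset,
        ⟪s' - s, emb j⟫ ≠ ⟪s' - s, emb k⟫ := by
      by_contra h
      push_neg at h
      obtain ⟨v₀, hv₀⟩ := hVne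
      apply hne
      have hu : s' - s = 0 := by
        apply irred_unique_dir hirr (s' - s) ⟪s' - s, emb v₀⟫
        intro v hv
        exact h v ((Set.Finite.mem_toFinset hfin).2 hv) v₀ hv₀
      rw [sub_eq_zero] at hu
      exact hu
    have hj := jensen_strict hp hfin hsum s s' hnc
    rw [hmv] at hj
    have h1 := hs s'
    have h2 := hs' s
    simp only [pairR_eq_inner] at h1 h2
    rw [inner_sub_left] at hj
    simp only [logKappa] at h1 h2
    linarith
  · rw [(hasGradientAt_logKappa hp hfin hsum s).gradient, hmv]

end RWalk
end
end

section
/- Let p be the step distribution of an irreducible random walk on ℤ^d with finite support and period r, and for x ∈ ℤ^d let m_x denote the smallest m ∈ ℕ with p(m; x) > 0. There exists K ∈ ℕ such that for every x ∈ ℤ^d and every n ≥ Kr + m_x: p(n; x) > 0 if n ≡ m_x (mod r), and p(n; x) = 0 otherwise. -/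
/- Framework for random walks on the integer lattice ℤ^d. -/

noncomputable section

namespace RWalk

section Aux

variable {d : ℕ} {p : (Fin d → ℤ) → ℝ}

theorem tfun_nonneg (hp : ∀ v, 0 ≤ p v) : ∀ n x, 0 ≤ tfun p n x
  | 0, x => by unfold tfun; positivity
  | n + 1, x => by
    unfold tfun
    exact finsum_nonneg fun y => mul_nonneg (tfun_nonneg hp n y) (hp _)

theorem tfun_support_finite (hfin : (Function.support p).Finite) :
    ∀ n, (Function.support (tfun p n)).Finite
  | 0 => Set.Finite.subset (Set.finite_singleton 0) (by
      intro x hx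
      simp only [Function.mem_support, tfun, ne_eq, ite_eq_right_iff,
        one_ne_zero, imp_false, not_not] at hx
      simpa using hx)
  | n + 1 => by
    have IH := tfun_support_finite hfin n
    refine Set.Finite.subset ((IH.prod hfin).image fun q => q.1 + q.2) ?_
    intro x hx
    simp only [Function.mem_support, tfun] at hx
    have : ∃ y, tfun p n y * p (x - y) ≠ 0 := by
      by_contra h
      push_neg at h
      exact hx (finsum_eq_zero_of_forall_eq_zero h)
    obtain ⟨y, hy⟩ := this
    refine ⟨(y, x - y), ⟨?_, ?_⟩, by simp⟩
    · exact fun h0 => hy (by simp [h0])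
    · exact fun h0 => hy (by simp [h0])

theorem tfun_pos_add (hp : ∀ v, 0 ≤ p v) (hfin : (Function.support p).Finite) :
    ∀ b a (x y : Fin d → ℤ), 0 < tfun p a y → 0 < tfun p b (x - y) → 0 < tfun p (a + b) x
  | 0, a, x, y, ha, hb => by
    have hxy : x = y := by
      by_contra h
      have : x - y ≠ 0 := sub_ne_zero.2 h
      simp [tfun, this] at hb
    simpa [hxy] using ha
  | b + 1, a, x, y, ha, hb => by
    have hb' : ∃ w, 0 < tfun p b w * p (x - y - w) := by
      by_contra h
      push_neg at h
      have hz : ∀ w, tfun p b w * p (x - y - w) = 0 := fun w =>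
        le_antisymm (h w) (mul_nonneg (tfun_nonneg hp b w) (hp _))
      have : tfun p (b + 1) (x - y) = 0 := by
        show (∑ᶠ w, tfun p b w * p (x - y - w)) = 0
        exact finsum_eq_zero_of_forall_eq_zero hz
      rw [this] at hb; exact lt_irrefl 0 hb
    obtain ⟨w, hw⟩ := hb'
    have hbw : 0 < tfun p b w := by
      rcases (mul_pos_iff.1 hw) with ⟨h1, _⟩ | ⟨h1, _⟩
      · exact h1
      · exact absurd h1 (not_lt.2 (tfun_nonneg hp b w))
    have hpw : 0 < p (x - y - w) := by
      rcases (mul_pos_iff.1 hw) with ⟨_, h2⟩ | ⟨_, h2⟩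
      · exact h2
      · exact absurd h2 (not_lt.2 (hp _))
    have IH : 0 < tfun p (a + b) (y + w) :=
      tfun_pos_add hp hfin b a (y + w) y ha (by simpa using hbw)
    have key : tfun p (a + b) (y + w) * p (x - (y + w)) ≤ tfun p (a + b + 1) x := by
      show _ ≤ ∑ᶠ z, tfun p (a + b) z * p (x - z)
      refine single_le_finsum (y + w) ?_ fun z => mul_nonneg (tfun_nonneg hp _ z) (hp _)
      exact Set.Finite.subset (tfun_support_finite hfin (a + b)) (by
        intro z hz
        simp only [Function.mem_support] at hz ⊢
        exact fun h0 => hz (by simp [h0]))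
    have : 0 < tfun p (a + b) (y + w) * p (x - (y + w)) := by
      refine mul_pos IH ?_
      have : x - (y + w) = x - y - w := by abel
      rwa [this]
    have hgoal : 0 < tfun p (a + b + 1) x := lt_of_lt_of_le this key
    have : a + (b + 1) = a + b + 1 := by ring
    rwa [this]

/-- `Sm n`: either `n = 0` or the walk can return to the origin in `n` steps. -/
def Sm (p : (Fin d → ℤ) → ℝ) (n : ℕ) : Prop := n = 0 ∨ 0 < tfun p n 0

theorem Sm_add (hp : ∀ v, 0 ≤ p v) (hfin : (Function.support p).Finite) {a b : ℕ}
    (ha : Sm p a) (hb : Sm p b) : Sm p (a + b) := by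
  rcases ha with ha | ha
  · simpa [ha] using hb
  rcases hb with hb | hb
  · rw [hb, Nat.add_zero]; exact Or.inr ha
  exact Or.inr (tfun_pos_add hp hfin b a 0 0 ha (by simpa using hb))

theorem Sm_mul (hp : ∀ v, 0 ≤ p v) (hfin : (Function.support p).Finite) {t : ℕ}
    (ht : Sm p t) : ∀ k : ℕ, Sm p (k * t)
  | 0 => Or.inl (by simp)
  | k + 1 => by
    have := Sm_add hp hfin (Sm_mul hp hfin ht k) ht
    simpa [add_mul] using this

end Aux

/-- There is `K ∈ ℕ` such that for all `x` and all `n ≥ Kr + m_x`: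
`p(n;x) > 0` if `n ≡ m_x (mod r)` and `p(n;x) = 0` otherwise.  Here `r` is the period,
specified by the gcd hypotheses `hr1`, `hr2`, and `m` ranges over the minimal
positive-probability times for `x`. -/
theorem statement13 (d : ℕ) (p : (Fin d → ℤ) → ℝ) (hp : ∀ v, 0 ≤ p v)
    (hfin : (Function.support p).Finite) (hsum : ∑ᶠ v, p v = 1) (hirr : Irred p)
    (r : ℕ) (hr1 : ∀ n : ℕ, 0 < n → 0 < tfun p n 0 → r ∣ n)
    (hr2 : ∀ m : ℕ, (∀ n : ℕ, 0 < n → 0 < tfun p n 0 → m ∣ n) → m ∣ r) :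
    ∃ K : ℕ, ∀ x : Fin d → ℤ,
      ∀ m : ℕ, 0 < tfun p m x → (∀ k : ℕ, 0 < tfun p k x → m ≤ k) →
        ∀ n : ℕ, K * r + m ≤ n →
          (n % r = m % r → 0 < tfun p n x) ∧
          (¬ n % r = m % r → tfun p n x = 0) := by
  classical
  obtain ⟨a0, ha0pos, ha0⟩ := hirr 0
  have hrdvd0 := hr1 a0 ha0pos ha0
  have hrpos : 0 < r := by
    rcases Nat.eq_zero_or_pos r with h | h
    · subst h; rw [Nat.zero_dvd] at hrdvd0; omega
    · exact h
  -- the set of positive "differences" of returnable times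
  set P : Set ℕ := {k | 0 < k ∧ ∃ s t : ℕ, Sm p s ∧ Sm p t ∧ s = t + k} with hPdef
  have hPne : a0 ∈ P := ⟨ha0pos, a0, 0, Or.inr ha0, Or.inl rfl, by omega⟩
  obtain ⟨hgpos, s, t, hs, ht, hst⟩ : sInf P ∈ P := Nat.sInf_mem ⟨a0, hPne⟩
  set g := sInf P with hg
  -- g divides every element of S
  have hgdvd : ∀ n : ℕ, 0 < n → 0 < tfun p n 0 → g ∣ n := by
    intro n hn hpos
    by_contra hnd
    have hmod : n % g ≠ 0 := fun h => hnd (Nat.dvd_of_mod_eq_zero h)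
    have hρlt : n % g < g := Nat.mod_lt _ hgpos
    set q := n / g with hqdef
    set ρ := n % g with hρdef
    have hρP : ρ ∈ P := by
      refine ⟨Nat.pos_of_ne_zero hmod, n + q * t, q * s, ?_, ?_, ?_⟩
      · exact Sm_add hp hfin (Or.inr hpos) (Sm_mul hp hfin ht q)
      · exact Sm_mul hp hfin hs q
      · have hn' : n = g * q + ρ := (Nat.div_add_mod n g).symm
        calc n + q * t = g * q + ρ + q * t := by rw [← hn']
          _ = q * (t + g) + ρ := by ring
          _ = q * s + ρ := by rw [← hst]
    have := Nat.sInf_le hρP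
    omega
  -- g = r
  have hgr : g = r := by
    have hg_dvd_r : g ∣ r := hr2 g hgdvd
    have hspos : 0 < s := by omega
    have hrs : r ∣ s := hr1 s hspos (hs.resolve_left (by omega))
    have hrt : r ∣ t := by
      rcases Nat.eq_zero_or_pos t with h | h
      · simp [h]
      · exact hr1 t h (ht.resolve_left (by omega))
    have hrg : r ∣ g := by
      have := Nat.dvd_sub hrs hrt
      have hsub : s - t = g := by omega
      rwa [hsub] at this
    exact Nat.dvd_antisymm hg_dvd_r hrg
  -- write t = r * w, s = r * (w+1)
  have hrt : r ∣ t := by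
    have hrg : r ∣ g := hgr ▸ dvd_refl r
    rcases Nat.eq_zero_or_pos t with h | h
    · simp [h]
    · exact hr1 t h (ht.resolve_left (by omega))
  obtain ⟨w, hw⟩ := hrt
  -- key: all large multiples of r are returnable
  have key : ∀ q : ℕ, w * w + 1 ≤ q → 0 < tfun p (q * r) 0 := by
    intro q hq
    have hqr_pos : 0 < q * r := Nat.mul_pos (by omega) hrpos
    rcases Nat.eq_zero_or_pos w with hw0 | hw0
    · -- t = 0, s = r
      have ht0 : t = 0 := by rw [hw, hw0, mul_zero]
      have hsr : s = r := by omega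
      have : Sm p (q * s) := Sm_mul hp hfin hs q
      rw [hsr] at this
      exact this.resolve_left (by omega)
    · -- w ≥ 1
      set β := q % w with hβdef
      have hβlt : β < w := Nat.mod_lt _ hw0
      have hqw : w ≤ q / w := by
        rw [Nat.le_div_iff_mul_le hw0]
        omega
      set α := q / w - β with hαdef
      have hdm : w * (q / w) + β = q := Nat.div_add_mod q w
      have hqeq : q = α * w + β * (w + 1) := by
        have h1 : β * w ≤ (q / w) * w :=
          Nat.mul_le_mul_right w (le_trans (le_of_lt hβlt) hqw)
        have h2 : α * w = (q / w) * w - β * w := Nat.sub_mul _ _ _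
        have h3 : (q / w) * w = w * (q / w) := Nat.mul_comm _ _
        set X := (q / w) * w
        set Y := β * w
        have h4 : β * (w + 1) = Y + β := by ring
        omega
      have hs' : s = r * (w + 1) := by rw [hst, hw, hgr]; ring
      have hsum' : q * r = α * t + β * s := by
        rw [hqeq, hw, hs']; ring
      have : Sm p (α * t + β * s) :=
        Sm_add hp hfin (Sm_mul hp hfin ht α) (Sm_mul hp hfin hs β)
      rw [← hsum'] at this
      exact this.resolve_left (by omega)
  refine ⟨w * w + 1, fun x m hm _hmin n hn => ?_⟩
  constructor
  · -- n ≡ m mod r : positivity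
    intro hmod
    have hmn : m ≤ n := le_trans (Nat.le_add_left m _) hn
    have hdvd : r ∣ n - m := (Nat.modEq_iff_dvd' hmn).1 hmod.symm
    obtain ⟨q, hq⟩ := hdvd
    have hKr : (w * w + 1) * r ≤ n - m := by omega
    have hqK : w * w + 1 ≤ q := by
      rw [hq] at hKr
      exact Nat.le_of_mul_le_mul_right (by rw [mul_comm r q] at hKr; exact hKr) hrpos
    have hpos := key q hqK
    have hn' : n = q * r + m := by
      rw [mul_comm, ← hq]
      exact (Nat.sub_add_cancel hmn).symm
    rw [hn']
    exact tfun_pos_add hp hfin m (q * r) x 0 hpos (by simpa using hm)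
  · -- otherwise zero
    intro hne
    by_contra h0
    have hpos : 0 < tfun p n x := lt_of_le_of_ne (tfun_nonneg hp n x) (Ne.symm h0)
    obtain ⟨l, hlpos, hl⟩ := hirr (-x)
    have h1 : 0 < tfun p (n + l) 0 :=
      tfun_pos_add hp hfin l n 0 x hpos (by simpa [zero_sub] using hl)
    have h2 : 0 < tfun p (m + l) 0 :=
      tfun_pos_add hp hfin l m 0 x hm (by simpa [zero_sub] using hl)
    have d1 := hr1 (n + l) (by omega) h1
    have d2 := hr1 (m + l) (by omega) h2
    have hmeq : n + l ≡ m + l [MOD r] :=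
      ((Nat.modEq_zero_iff_dvd).2 d1).trans ((Nat.modEq_zero_iff_dvd).2 d2).symm
    exact hne (Nat.ModEq.add_right_cancel' l hmeq)

end RWalk
end
end
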